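/- Let η be a positive equivalence relation such that at least one η-family is finitely learnable. Then there are finitely learnable η-families 𝓛₁ and 𝓛₂ such that 𝓛₁ ∪ 𝓛₂ is an η-family that is not finitely learnable; furthermore, 𝓛₂ ∖ 𝓛₁ contains exactly one language. -/

import Mathlib

namespace PEL

/-- Evaluation of the `e`-th partial recursive function (via the standard
numbering of `Nat.Partrec.Code`). -/
def evalCode (e : ℕ) (x : ℕ) : Part ℕ :=
  (Denumerable.ofNat Nat.Partrec.Code e).eval x

/-- The `e`-th recursively enumerable set `W_e = dom φ_e`. -/
def W (e : ℕ) : Set ℕ := {x | (evalCode e x).Dom}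

/-- A set is r.e. iff it equals some `W_e`. -/
def RESet (S : Set ℕ) : Prop := ∃ e, W e = S

/-- A positive equivalence relation: an r.e. equivalence relation on ℕ
with infinitely many equivalence classes. -/
structure PosEq where
  rel : ℕ → ℕ → Prop
  equiv : Equivalence rel
  re : ∃ e, ∀ x y, rel x y ↔ Nat.pair x y ∈ W e
  classes_infinite : (Set.range fun x => {y | rel x y}).Infinite

/-- The η-equivalence class of `x`. -/
def classOf (η : PosEq) (x : ℕ) : Set ℕ := {y | η.rel x y}

/-- A set is η-closed iff it is a union of η-equivalence classes. -/
def EtaClosed (η : PosEq) (S : Set ℕ) : Prop := ∀ x ∈ S, classOf η x ⊆ S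

/-- A set is η-finite iff it is a union of finitely many η-equivalence classes. -/
def EtaFinite (η : PosEq) (S : Set ℕ) : Prop :=
  EtaClosed η S ∧ (classOf η '' S).Finite

/-- A set is η-infinite iff it is a union of infinitely many η-equivalence classes. -/
def EtaInfinite (η : PosEq) (S : Set ℕ) : Prop :=
  EtaClosed η S ∧ (classOf η '' S).Infinite

/-- `f` is a one-one uniformly r.e. numbering of the class `C`:
`f` is computable, `i ↦ W_{f i}` is injective, and `C = {W_{f i} : i ∈ ℕ}`. -/
def OneOneNumbering (f : ℕ → ℕ) (C : Set (Set ℕ)) : Prop :=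
  Computable f ∧ (∀ i j, W (f i) = W (f j) → i = j) ∧ C = Set.range fun i => W (f i)

/-- An η-family: an (automatically infinite) class of η-closed r.e. sets
admitting a one-one uniformly r.e. numbering. -/
def EtaFamily (η : PosEq) (C : Set (Set ℕ)) : Prop :=
  (∀ L ∈ C, EtaClosed η L) ∧ ∃ f, OneOneNumbering f C

/-- `a η n` is the `n`-th (in ascending order) least representative of an
η-equivalence class. -/
noncomputable def a (η : PosEq) (n : ℕ) : ℕ := Nat.nth (fun x => ∀ y, η.rel x y → x ≤ y) n

/-- `A η n = [a_0] ∪ … ∪ [a_{n-1}]`. -/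
def A (η : PosEq) (n : ℕ) : Set ℕ := {x | ∃ m < n, η.rel (a η m) x}

/-- The ascending family `𝒜_η = {A_n : n ∈ ℕ}`. -/
def ascendingFamily (η : PosEq) : Set (Set ℕ) := Set.range (A η)

/-- A learner: a map from finite sequences over ℕ ∪ {#} (with `none` as the
pause symbol `#`) to hypotheses in ℕ ∪ {?} (with `none` as `?`). -/
abbrev Learner := List (Option ℕ) → Option ℕ

/-- The content of a text. -/
def cntT (T : ℕ → Option ℕ) : Set ℕ := {x | ∃ n, T n = some x}

/-- `T` is a text for `L`. -/
def IsText (T : ℕ → Option ℕ) (L : Set ℕ) : Prop := cntT T = L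

/-- The initial segment `T[n] = T(0), …, T(n-1)`. -/
def seg (T : ℕ → Option ℕ) (n : ℕ) : List (Option ℕ) := (List.range n).map T

/-- The content of a finite sequence. -/
def cntL (σ : List (Option ℕ)) : Set ℕ := {x | some x ∈ σ}

/-- Explanatory learning with hypotheses interpreted in hypothesis space `H`. -/
def ExLearnsIn (H : ℕ → Set ℕ) (M : Learner) (C : Set (Set ℕ)) : Prop :=
  ∀ L ∈ C, ∀ T, IsText T L →
    ∃ n e, M (seg T n) = some e ∧ H e = L ∧ ∀ j, n ≤ j → M (seg T j) = M (seg T n)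

/-- Behaviourally correct learning with hypothesis space `H`. -/
def BCLearnsIn (H : ℕ → Set ℕ) (M : Learner) (C : Set (Set ℕ)) : Prop :=
  ∀ L ∈ C, ∀ T, IsText T L →
    ∃ n, ∀ j, n ≤ j → ∃ e, M (seg T j) = some e ∧ H e = L

/-- Finite (one-shot) learning with hypothesis space `H`. -/
def FinLearnsIn (H : ℕ → Set ℕ) (M : Learner) (C : Set (Set ℕ)) : Prop :=
  ∀ L ∈ C, ∀ T, IsText T L →
    ∃ n e, M (seg T n) = some e ∧ H e = L ∧ (∀ m, m < n → M (seg T m) = none) ∧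
      ∀ j, n ≤ j → M (seg T j) = M (seg T n)

/-- The sequence of hypotheses of `M` on text `T` converges. -/
def ConvergesOn (M : Learner) (T : ℕ → Option ℕ) : Prop :=
  ∃ n, ∀ j, n ≤ j → M (seg T j) = M (seg T n)

/-- Confident learning with hypothesis space `H`: explanatory learning with
convergence on every text for every subset of ℕ. -/
def ConfLearnsIn (H : ℕ → Set ℕ) (M : Learner) (C : Set (Set ℕ)) : Prop :=
  ExLearnsIn H M C ∧ ∀ T, ConvergesOn M T

/-- Vacillatory learning with hypothesis space `H`. -/
def VacLearnsIn (H : ℕ → Set ℕ) (M : Learner) (C : Set (Set ℕ)) : Prop :=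
  BCLearnsIn H M C ∧
    ∀ L ∈ C, ∀ T, IsText T L → {h : Option ℕ | ∃ n, 1 ≤ n ∧ M (seg T n) = h}.Finite

/-- Weakly confident learning with hypothesis space `H`: explanatory learning
with convergence on every text consistent with the class. -/
def WConfLearnsIn (H : ℕ → Set ℕ) (M : Learner) (C : Set (Set ℕ)) : Prop :=
  ExLearnsIn H M C ∧ ∀ T, (∃ L ∈ C, cntT T ⊆ L) → ConvergesOn M T

def ExLearnable (C : Set (Set ℕ)) : Prop :=
  ∃ M : Learner, Computable M ∧ ExLearnsIn W M C

def BCLearnable (C : Set (Set ℕ)) : Prop :=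
  ∃ M : Learner, Computable M ∧ BCLearnsIn W M C

def FinLearnable (C : Set (Set ℕ)) : Prop :=
  ∃ M : Learner, Computable M ∧ FinLearnsIn W M C

def ConfLearnable (C : Set (Set ℕ)) : Prop :=
  ∃ M : Learner, Computable M ∧ ConfLearnsIn W M C

def VacLearnable (C : Set (Set ℕ)) : Prop :=
  ∃ M : Learner, Computable M ∧ VacLearnsIn W M C

def WConfLearnable (C : Set (Set ℕ)) : Prop :=
  ∃ M : Learner, Computable M ∧ WConfLearnsIn W M C



/-! ### Auxiliary machinery: texts and segments -/

lemma seg_length (T : ℕ → Option ℕ) (n : ℕ) : (seg T n).length = n := by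
  simp [seg]

lemma mem_cntL_seg {T : ℕ → Option ℕ} {n x} :
    x ∈ cntL (seg T n) ↔ ∃ m < n, T m = some x := by
  simp only [cntL, seg, Set.mem_setOf_eq, List.mem_map, List.mem_range, eq_comm]

lemma cntL_seg_subset {T : ℕ → Option ℕ} {L : Set ℕ} (hT : IsText T L) (n : ℕ) :
    cntL (seg T n) ⊆ L := by
  intro x hx
  rcases mem_cntL_seg.1 hx with ⟨m, _, hm⟩
  rw [← hT]; exact ⟨m, hm⟩

lemma cntL_seg_mono {T : ℕ → Option ℕ} {m n : ℕ} (h : m ≤ n) :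
    cntL (seg T m) ⊆ cntL (seg T n) := by
  intro x hx
  rcases mem_cntL_seg.1 hx with ⟨k, hk, hT⟩
  exact mem_cntL_seg.2 ⟨k, lt_of_lt_of_le hk h, hT⟩

open Classical in
/-- The canonical text for a set. -/
noncomputable def canonText (L : Set ℕ) : ℕ → Option ℕ :=
  fun n => if n ∈ L then some n else none

lemma canonText_isText (L : Set ℕ) : IsText (canonText L) L := by
  ext x
  simp only [cntT, canonText, Set.mem_setOf_eq]
  constructor
  · rintro ⟨n, hn⟩
    by_cases h : n ∈ L
    · rw [if_pos h] at hn; cases hn; exact h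
    · rw [if_neg h] at hn; cases hn
  · intro hx; exact ⟨x, if_pos hx⟩

/-- A text extending a finite sequence `σ` to a text for `L` (when `cntL σ ⊆ L`). -/
noncomputable def extText (σ : List (Option ℕ)) (L : Set ℕ) : ℕ → Option ℕ :=
  fun k => if h : k < σ.length then σ.get ⟨k, h⟩ else canonText L (k - σ.length)

lemma seg_extText (σ : List (Option ℕ)) (L : Set ℕ) :
    seg (extText σ L) σ.length = σ := by
  apply List.ext_getElem
  · simp [seg]
  · intro i h1 h2
    simp only [seg, List.getElem_map, List.getElem_range, extText]
    rw [dif_pos h2]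
    simp

lemma extText_isText {σ : List (Option ℕ)} {L : Set ℕ} (hσ : cntL σ ⊆ L) :
    IsText (extText σ L) L := by
  ext x
  simp only [cntT, Set.mem_setOf_eq]
  constructor
  · rintro ⟨k, hk⟩
    unfold extText at hk
    by_cases h : k < σ.length
    · rw [dif_pos h] at hk
      exact hσ (show some x ∈ σ from hk ▸ σ.get_mem _)
    · rw [dif_neg h] at hk
      unfold canonText at hk
      by_cases h2 : (k - σ.length) ∈ L
      · rw [if_pos h2] at hk; cases hk; exact h2
      · rw [if_neg h2] at hk; cases hk
  · intro hx
    refine ⟨x + σ.length, ?_⟩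
    unfold extText
    rw [dif_neg (by omega)]
    unfold canonText
    rw [Nat.add_sub_cancel, if_pos hx]

/-! ### The commitment lemma for finite learners -/

lemma commit {M : Learner} {C : Set (Set ℕ)} (hM : FinLearnsIn W M C) {L' : Set ℕ}
    (hL' : L' ∈ C) {σ : List (Option ℕ)} {e : ℕ} (hσ : cntL σ ⊆ L') (he : M σ = some e) :
    W e = L' := by
  obtain ⟨n, e', h1, h2, h3, h4⟩ := hM L' hL' (extText σ L') (extText_isText hσ)
  rcases le_or_gt n σ.length with hn | hn
  · have h5 := h4 σ.length hn
    rw [seg_extText, he, h1] at h5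
    cases h5
    exact h2
  · have h5 := h3 σ.length hn
    rw [seg_extText, he] at h5
    cases h5

lemma exists_fire {M : Learner} {C : Set (Set ℕ)} (hM : FinLearnsIn W M C) {L : Set ℕ}
    (hL : L ∈ C) : ∃ σ e, cntL σ ⊆ L ∧ M σ = some e := by
  obtain ⟨n, e, h1, _, _, _⟩ := hM L hL (canonText L) (canonText_isText L)
  exact ⟨seg (canonText L) n, e, cntL_seg_subset (canonText_isText L) n, h1⟩

lemma not_finLearnable_of_ssubset {C : Set (Set ℕ)} {L L' : Set ℕ}
    (hL : L ∈ C) (hL' : L' ∈ C) (hss : L ⊂ L') : ¬ FinLearnable C := by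
  rintro ⟨M, _, hM⟩
  obtain ⟨σ, e, hσ, he⟩ := exists_fire hM hL
  have h1 : W e = L := commit hM hL hσ he
  have h2 : W e = L' := commit hM hL' (hσ.trans hss.subset) he
  exact hss.ne (h1 ▸ h2)


/-! ### Unions of finitely many η-classes, with uniformly computable r.e. indices -/

/-- The union of the η-classes of the members of a finite list. -/
def Gset (η : PosEq) (t : List ℕ) : Set ℕ := {x | ∃ d ∈ t, η.rel d x}

lemma Gset_etaClosed (η : PosEq) (t : List ℕ) : EtaClosed η (Gset η t) := by
  rintro x ⟨d, hd, hdx⟩ y hy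
  exact ⟨d, hd, η.equiv.trans hdx hy⟩

lemma mem_Gset_self (η : PosEq) {t : List ℕ} {d : ℕ} (hd : d ∈ t) : d ∈ Gset η t :=
  ⟨d, hd, η.equiv.refl d⟩

noncomputable def etaE (η : PosEq) : ℕ := η.re.choose

lemma etaE_spec (η : PosEq) : ∀ x y, η.rel x y ↔ Nat.pair x y ∈ W (etaE η) :=
  η.re.choose_spec

open Nat.Partrec.Code in
/-- Bounded check whether some member of a (coded) list is η-related (within `t` steps,
via the code `c`) to a given number. -/
def checkB (c : Nat.Partrec.Code) (p : ℕ × ℕ) : Bool :=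
  (((Encodable.decode p.1.unpair.1 : Option (List ℕ)).getD []).foldr
    (fun d r => (evaln p.2 c (Nat.pair d p.1.unpair.2)).isSome || r) false)

lemma foldr_or_eq_true (p : ℕ → Bool) :
    ∀ l : List ℕ, (l.foldr (fun d r => p d || r) false = true ↔ ∃ d ∈ l, p d = true)
  | [] => by simp
  | a :: l => by simp [List.foldr_cons, foldr_or_eq_true p l]

lemma foldr_and_eq_true (p : ℕ → Bool) :
    ∀ l : List ℕ, (l.foldr (fun d r => p d && r) true = true ↔ ∀ d ∈ l, p d = true)
  | [] => by simp
  | a :: l => by simp [List.foldr_cons, foldr_and_eq_true p l]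

open Nat.Partrec.Code in
lemma checkB_primrec (c : Nat.Partrec.Code) : Primrec (checkB c) := by
  have hlist : Primrec fun p : ℕ × ℕ =>
      ((Encodable.decode p.1.unpair.1 : Option (List ℕ)).getD []) :=
    Primrec.option_getD.comp
      (Primrec.decode.comp (Primrec.fst.comp (Primrec.unpair.comp Primrec.fst)))
      (Primrec.const [])
  have k1 : Primrec fun x : (ℕ × ℕ) × (ℕ × Bool) => x.1.2 := Primrec.snd.comp Primrec.fst
  have k3 : Primrec fun x : (ℕ × ℕ) × (ℕ × Bool) => x.2.1 := Primrec.fst.comp Primrec.snd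
  have k4 : Primrec fun x : (ℕ × ℕ) × (ℕ × Bool) => x.1.1.unpair.2 :=
    Primrec.snd.comp (Primrec.unpair.comp (Primrec.fst.comp Primrec.fst))
  have ev : Primrec fun x : (ℕ × ℕ) × (ℕ × Bool) =>
      evaln x.1.2 c (Nat.pair x.2.1 x.1.1.unpair.2) :=
    primrec_evaln.comp ((k1.pair (Primrec.const c)).pair (Primrec₂.natPair.comp k3 k4))
  have hstep : Primrec₂ fun (p : ℕ × ℕ) (q : ℕ × Bool) =>
      ((evaln p.2 c (Nat.pair q.1 p.1.unpair.2)).isSome || q.2) :=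
    Primrec.to₂ ((Primrec.dom_bool₂ (· || ·)).comp (Primrec.option_isSome.comp ev)
      (Primrec.snd.comp Primrec.snd))
  exact (Primrec.list_foldr hlist (Primrec.const false) hstep).of_eq fun p => rfl

open Nat.Partrec.Code in
lemma memF_partrec (c : Nat.Partrec.Code) :
    Nat.Partrec fun m => Nat.rfind fun t => Part.some (checkB c (m, t)) := by
  have h1 : Primrec (checkB c) := checkB_primrec c
  have h2 : Computable₂ fun (m t : ℕ) => checkB c (m, t) := by
    have := h1.to_comp
    exact this.of_eq (fun p => rfl) |>.to₂
  exact Partrec.nat_iff.1 (Partrec.rfind h2.partrec₂)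

open Nat.Partrec.Code in
noncomputable def memCode (η : PosEq) : Nat.Partrec.Code :=
  (exists_code.1 (memF_partrec (Denumerable.ofNat Nat.Partrec.Code (etaE η)))).choose

open Nat.Partrec.Code in
lemma memCode_spec (η : PosEq) :
    eval (memCode η) = fun m => Nat.rfind fun t =>
      Part.some (checkB (Denumerable.ofNat Nat.Partrec.Code (etaE η)) (m, t)) :=
  (exists_code.1 (memF_partrec _)).choose_spec

open Nat.Partrec.Code in
/-- A uniformly computable r.e. index for `Gset η t`. -/
noncomputable def listIdx (η : PosEq) (t : List ℕ) : ℕ :=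
  Encodable.encode (curry (memCode η) (Encodable.encode t))

open Nat.Partrec.Code in
lemma listIdx_computable (η : PosEq) : Computable (listIdx η) :=
  (Primrec.encode.comp
    (primrec₂_curry.comp (Primrec.const (memCode η)) Primrec.encode)).to_comp

open Nat.Partrec.Code in
lemma W_listIdx (η : PosEq) (t : List ℕ) : W (listIdx η t) = Gset η t := by
  classical
  set c := Denumerable.ofNat Nat.Partrec.Code (etaE η) with hc
  have hrel : ∀ d x : ℕ, η.rel d x ↔ (eval c (Nat.pair d x)).Dom := by
    intro d x
    rw [etaE_spec η d x]
    rfl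
  ext x
  show (evalCode (listIdx η t) x).Dom ↔ _
  unfold evalCode listIdx
  rw [Denumerable.ofNat_encode, eval_curry, memCode_spec]
  refine Nat.rfind_dom.trans ?_
  constructor
  · rintro ⟨s, hs, -⟩
    rw [Part.mem_some_iff] at hs
    replace hs := hs.symm
    rw [checkB, Nat.unpair_pair] at hs
    simp only [Encodable.encodek, Option.getD_some] at hs
    rw [foldr_or_eq_true] at hs
    obtain ⟨d, hd, hev⟩ := hs
    rw [Option.isSome_iff_exists] at hev
    obtain ⟨y, hy⟩ := hev
    have := evaln_sound hy
    exact ⟨d, hd, (hrel d x).2 (Part.dom_iff_mem.2 ⟨y, this⟩)⟩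
  · rintro ⟨d, hd, hdx⟩
    have := (hrel d x).1 hdx
    obtain ⟨y, hy⟩ := Part.dom_iff_mem.1 this
    obtain ⟨k, hk⟩ := evaln_complete.1 hy
    refine ⟨k, ?_, fun _ => trivial⟩
    rw [Part.mem_some_iff]
    symm
    rw [checkB, Nat.unpair_pair]
    simp only [Encodable.encodek, Option.getD_some]
    rw [foldr_or_eq_true]
    exact ⟨d, hd, Option.isSome_iff_exists.2 ⟨y, hk⟩⟩


/-! ### Boolean membership and inclusion on lists, primitive recursively -/

def bmem (x : ℕ) (l : List ℕ) : Bool := l.foldr (fun d r => (d == x) || r) false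

lemma bmem_iff {x : ℕ} {l : List ℕ} : bmem x l = true ↔ x ∈ l := by
  rw [bmem, foldr_or_eq_true]
  exact ⟨fun ⟨d, hd, hdx⟩ => (beq_iff_eq.1 hdx) ▸ hd, fun h => ⟨x, h, beq_self_eq_true x⟩⟩

lemma bmem_primrec : Primrec₂ bmem := by
  have hstep : Primrec₂ fun (p : ℕ × List ℕ) (q : ℕ × Bool) => ((q.1 == p.1) || q.2) :=
    Primrec.to₂ ((Primrec.dom_bool₂ (· || ·)).comp
      (Primrec.beq.comp (Primrec.fst.comp Primrec.snd) (Primrec.fst.comp Primrec.fst))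
      (Primrec.snd.comp Primrec.snd))
  exact Primrec.to₂
    ((Primrec.list_foldr Primrec.snd (Primrec.const false) hstep).of_eq fun p => rfl)

def ball (t l : List ℕ) : Bool := t.foldr (fun d r => bmem d l && r) true

lemma ball_iff {t l : List ℕ} : ball t l = true ↔ ∀ d ∈ t, d ∈ l := by
  rw [ball, foldr_and_eq_true]
  simp [bmem_iff]

lemma ball_primrec : Primrec₂ ball := by
  have hstep : Primrec₂ fun (p : List ℕ × List ℕ) (q : ℕ × Bool) => (bmem q.1 p.2 && q.2) :=
    Primrec.to₂ ((Primrec.dom_bool₂ (· && ·)).comp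
      (bmem_primrec.comp (Primrec.fst.comp Primrec.snd) (Primrec.snd.comp Primrec.fst))
      (Primrec.snd.comp Primrec.snd))
  exact Primrec.to₂
    ((Primrec.list_foldr Primrec.fst (Primrec.const true) hstep).of_eq fun p => rfl)

/-! ### A computable minimization principle -/

lemma computable_nat_find {α} [Primcodable α] {p : α → ℕ → Bool} (hp : Computable₂ p)
    (H : ∀ a, ∃ n, p a n = true) : Computable fun a => Nat.find (H a) := by
  have hpr : Partrec₂ fun (a : α) (n : ℕ) => (Part.some (p a n) : Part Bool) := hp.partrec₂
  refine (Partrec.rfind hpr).of_eq fun a => ?_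
  show _ = Part.some (Nat.find (H a))
  rw [Part.eq_some_iff]
  refine Nat.mem_rfind.2 ?_
  constructor
  · rw [Part.mem_some_iff]
    exact (Nat.find_spec (H a)).symm
  · intro m hm
    rw [Part.mem_some_iff]
    have := Nat.find_min (H a) hm
    rw [Bool.not_eq_true] at this
    exact this.symm

open Nat.Partrec.Code in
lemma evaln_list_bound (c : Nat.Partrec.Code) (lst : List ℕ)
    (h : ∀ x ∈ lst, ∃ k, (evaln k c x).isSome = true) :
    ∃ t, ∀ x ∈ lst, (evaln t c x).isSome = true := by
  induction lst with
  | nil => exact ⟨0, by simp⟩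
  | cons a l ih =>
    obtain ⟨t1, ht1⟩ := ih fun x hx => h x (List.mem_cons_of_mem a hx)
    obtain ⟨k, hk⟩ := h a List.mem_cons_self
    refine ⟨max k t1, ?_⟩
    intro x hx
    rcases List.mem_cons.1 hx with rfl | hx
    · obtain ⟨y, hy⟩ := Option.isSome_iff_exists.1 hk
      exact Option.isSome_iff_exists.2 ⟨y, evaln_mono (le_max_left _ _) hy⟩
    · obtain ⟨y, hy⟩ := Option.isSome_iff_exists.1 (ht1 x hx)
      exact Option.isSome_iff_exists.2 ⟨y, evaln_mono (le_max_right _ _) hy⟩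

lemma filterMap_primrec : Primrec fun σ : List (Option ℕ) => σ.filterMap id :=
  Primrec.listFilterMap Primrec.id Primrec₂.right

lemma mem_filterMap_id {σ : List (Option ℕ)} {x : ℕ} :
    x ∈ σ.filterMap id ↔ x ∈ cntL σ := by
  rw [List.mem_filterMap]
  constructor
  · rintro ⟨a, ha, rfl⟩; exact ha
  · intro hx; exact ⟨some x, hx, rfl⟩

/-! ### Computably extracting telltales from a finite learner -/

open Nat.Partrec.Code in
lemma exists_telltale {C : Set (Set ℕ)} {M : Learner} (hMc : Computable M)
    {f : ℕ → ℕ} (hf : Computable f) (hM : FinLearnsIn W M C)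
    (hC : C = Set.range fun i => W (f i)) :
    ∃ l : ℕ → List ℕ, Computable l ∧
      ∀ j, (∀ d ∈ l j, d ∈ W (f j)) ∧
        ∃ σ e, (∀ x, x ∈ cntL σ ↔ x ∈ l j) ∧ M σ = some e := by
  classical
  -- the two components of the search predicate
  set S : ℕ → Bool := fun s =>
    Option.casesOn (Encodable.decode s : Option (List (Option ℕ))) false
      (fun σ => (M σ).isSome) with hS
  set R : ℕ × ℕ → Bool := fun q =>
    Option.casesOn (Encodable.decode q.2.unpair.1 : Option (List (Option ℕ))) false
      (fun σ => (σ.filterMap id).foldr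
        (fun x r => (evaln q.2.unpair.2 (Denumerable.ofNat Nat.Partrec.Code q.1) x).isSome && r)
        true) with hR
  have hScomp : Computable S :=
    Computable.option_casesOn Computable.decode (Computable.const false)
      ((Primrec.option_isSome.to_comp.comp (hMc.comp Computable.snd)).to₂)
  have hRprim : Primrec R := by
    have hlst : Primrec₂ fun (a : (ℕ × ℕ) × List (Option ℕ)) (_ : Unit) => a.2.filterMap id :=
      Primrec.to₂ (filterMap_primrec.comp (Primrec.snd.comp Primrec.fst))
    have hfm : Primrec fun a : (ℕ × ℕ) × List (Option ℕ) => a.2.filterMap id :=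
      filterMap_primrec.comp Primrec.snd
    have hstep : Primrec₂ fun (a : (ℕ × ℕ) × List (Option ℕ)) (q : ℕ × Bool) =>
        ((evaln a.1.2.unpair.2 (Denumerable.ofNat Nat.Partrec.Code a.1.1) q.1).isSome && q.2) := by
      have t1 : Primrec fun x : ((ℕ × ℕ) × List (Option ℕ)) × (ℕ × Bool) =>
          x.1.1.2.unpair.2 :=
        Primrec.snd.comp (Primrec.unpair.comp
          (Primrec.snd.comp (Primrec.fst.comp Primrec.fst)))
      have t2 : Primrec fun x : ((ℕ × ℕ) × List (Option ℕ)) × (ℕ × Bool) =>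
          Denumerable.ofNat Nat.Partrec.Code x.1.1.1 :=
        (Primrec.ofNat _).comp (Primrec.fst.comp (Primrec.fst.comp Primrec.fst))
      have t3 : Primrec fun x : ((ℕ × ℕ) × List (Option ℕ)) × (ℕ × Bool) => x.2.1 :=
        Primrec.fst.comp Primrec.snd
      have ev : Primrec fun x : ((ℕ × ℕ) × List (Option ℕ)) × (ℕ × Bool) =>
          evaln x.1.1.2.unpair.2 (Denumerable.ofNat Nat.Partrec.Code x.1.1.1) x.2.1 :=
        primrec_evaln.comp ((t1.pair t2).pair t3)
      exact Primrec.to₂ ((Primrec.dom_bool₂ (· && ·)).comp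
        (Primrec.option_isSome.comp ev) (Primrec.snd.comp Primrec.snd))
    exact Primrec.option_casesOn
      (Primrec.decode.comp (Primrec.fst.comp (Primrec.unpair.comp Primrec.snd)))
      (Primrec.const false)
      (Primrec.to₂ ((Primrec.list_foldr hfm (Primrec.const true) hstep).of_eq fun a => rfl))
  set Q : ℕ → ℕ → Bool := fun j m => S m.unpair.1 && R (f j, m) with hQ
  have hQcomp : Computable₂ Q := by
    have c1 : Computable fun p : ℕ × ℕ => S p.2.unpair.1 :=
      hScomp.comp ((Primrec.fst.comp (Primrec.unpair.comp Primrec.snd)).to_comp)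
    have c2 : Computable fun p : ℕ × ℕ => R (f p.1, p.2) :=
      hRprim.to_comp.comp ((hf.comp Computable.fst).pair Computable.snd)
    exact ((Primrec.dom_bool₂ (· && ·)).to_comp.comp c1 c2).to₂
  have H : ∀ j, ∃ m, Q j m = true := by
    intro j
    have hWj : W (f j) ∈ C := by rw [hC]; exact ⟨j, rfl⟩
    obtain ⟨σ, e, hσ, he⟩ := exists_fire hM hWj
    have hev : ∀ x ∈ σ.filterMap id, ∃ k,
        (evaln k (Denumerable.ofNat Nat.Partrec.Code (f j)) x).isSome = true := by
      intro x hx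
      have hxW : x ∈ W (f j) := hσ (mem_filterMap_id.1 hx)
      obtain ⟨y, hy⟩ := Part.dom_iff_mem.1 hxW
      obtain ⟨k, hk⟩ := evaln_complete.1 hy
      exact ⟨k, Option.isSome_iff_exists.2 ⟨y, hk⟩⟩
    obtain ⟨t, ht⟩ := evaln_list_bound _ _ hev
    refine ⟨Nat.pair (Encodable.encode σ) t, ?_⟩
    show (S (Nat.pair (Encodable.encode σ) t).unpair.1 &&
      R (f j, Nat.pair (Encodable.encode σ) t)) = true
    rw [Bool.and_eq_true]
    constructor
    · show (Option.casesOn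
        (Encodable.decode (Nat.pair (Encodable.encode σ) t).unpair.1 :
          Option (List (Option ℕ))) false fun σ' => (M σ').isSome) = true
      rw [Nat.unpair_pair]
      simp only [Encodable.encodek]
      show (M σ).isSome = true
      rw [he]; rfl
    · show (Option.casesOn
        (Encodable.decode (Nat.pair (Encodable.encode σ) t).unpair.1 :
          Option (List (Option ℕ))) false fun σ' => (σ'.filterMap id).foldr
            (fun x r => (evaln (Nat.pair (Encodable.encode σ) t).unpair.2
              (Denumerable.ofNat Nat.Partrec.Code (f j)) x).isSome && r) true) = true
      simp only [Nat.unpair_pair, Encodable.encodek]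
      show ((σ.filterMap id).foldr
        (fun x r => (evaln t
          (Denumerable.ofNat Nat.Partrec.Code (f j)) x).isSome && r) true) = true
      rw [foldr_and_eq_true]
      exact ht
  set msel : ℕ → ℕ := fun j => Nat.find (H j) with hmsel
  have hmselc : Computable msel := computable_nat_find hQcomp H
  set σsel : ℕ → List (Option ℕ) := fun j =>
    (Encodable.decode (msel j).unpair.1 : Option (List (Option ℕ))).getD [] with hσsel
  have hσselc : Computable σsel :=
    Computable.option_getD
      (Computable.decode.comp
        ((Primrec.fst.comp Primrec.unpair).to_comp.comp hmselc))
      (Computable.const [])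
  refine ⟨fun j => (σsel j).filterMap id, filterMap_primrec.to_comp.comp hσselc, ?_⟩
  intro j
  have hQj : (S (msel j).unpair.1 && R (f j, msel j)) = true := Nat.find_spec (H j)
  rw [Bool.and_eq_true] at hQj
  obtain ⟨hSj, hRj⟩ := hQj
  have hSj' : (Option.casesOn (Encodable.decode (msel j).unpair.1 :
      Option (List (Option ℕ))) false fun σ' => (M σ').isSome) = true := hSj
  have hRj' : (Option.casesOn (Encodable.decode (msel j).unpair.1 :
      Option (List (Option ℕ))) false fun σ' => (σ'.filterMap id).foldr
        (fun x r => (evaln (msel j).unpair.2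
          (Denumerable.ofNat Nat.Partrec.Code (f j)) x).isSome && r) true) = true := hRj
  rcases hdec : (Encodable.decode (msel j).unpair.1 : Option (List (Option ℕ))) with _ | σ
  · rw [hdec] at hSj'; cases hSj'
  · rw [hdec] at hSj' hRj'
    have hσeq : σsel j = σ := by
      show (Encodable.decode (msel j).unpair.1 : Option (List (Option ℕ))).getD [] = σ
      rw [hdec]; rfl
    have hMσ : (M σ).isSome = true := hSj'
    obtain ⟨e, he⟩ := Option.isSome_iff_exists.1 hMσ
    simp only [hσeq]
    constructor
    · intro d hd
      have hall : ∀ x ∈ σ.filterMap id,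
          (evaln (msel j).unpair.2 (Denumerable.ofNat Nat.Partrec.Code (f j)) x).isSome
            = true := by
        rw [← foldr_and_eq_true]
        exact hRj'
      obtain ⟨y, hy⟩ := Option.isSome_iff_exists.1 (hall d hd)
      exact Part.dom_iff_mem.2 ⟨y, evaln_sound hy⟩
    · exact ⟨σ, e, fun x => (mem_filterMap_id (σ := σ) (x := x)).symm, he⟩


/-! ### Generic construction of η-families and finite learners from telltale lists -/

lemma etaFamily_of_tt (η : PosEq) (tt : ℕ → List ℕ) (htt : Computable tt)
    (hinj : ∀ r r', Gset η (tt r) = Gset η (tt r') → r = r') :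
    EtaFamily η (Set.range fun r => Gset η (tt r)) := by
  constructor
  · rintro L ⟨r, rfl⟩
    exact Gset_etaClosed η (tt r)
  · refine ⟨fun r => listIdx η (tt r), (listIdx_computable η).comp htt, ?_, ?_⟩
    · intro i j hij
      rw [W_listIdx, W_listIdx] at hij
      exact hinj _ _ hij
    · have : (fun i => W (listIdx η (tt i))) = fun r => Gset η (tt r) :=
        funext fun r => W_listIdx η (tt r)
      rw [this]

lemma exists_seg_sup {T : ℕ → Option ℕ} {L : Set ℕ} (hT : IsText T L) :
    ∀ t : List ℕ, (∀ x ∈ t, x ∈ L) → ∃ m, ∀ x ∈ t, x ∈ cntL (seg T m) := by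
  intro t
  induction t with
  | nil => exact fun _ => ⟨0, by simp⟩
  | cons a l ih =>
    intro ht
    obtain ⟨m0, hm0⟩ := ih fun x hx => ht x (List.mem_cons_of_mem a hx)
    have ha : a ∈ cntT T := by rw [hT]; exact ht a List.mem_cons_self
    obtain ⟨k, hk⟩ := ha
    refine ⟨max m0 (k + 1), ?_⟩
    intro x hx
    rcases List.mem_cons.1 hx with rfl | hx
    · exact mem_cntL_seg.2 ⟨k, by omega, hk⟩
    · exact cntL_seg_mono (le_max_left _ _) (hm0 x hx)

/-- The finite learner associated with a family of telltale lists `tt` and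
hypothesis indices `g`. -/
def ttLearner (tt : ℕ → List ℕ) (g : ℕ → ℕ) : Learner := fun σ =>
  bif decide ((((List.range (σ.length + 1)).map tt).findIdx
        fun trow => ball trow (σ.filterMap id)) <
      ((List.range (σ.length + 1)).map tt).length)
    then some (g (((List.range (σ.length + 1)).map tt).findIdx
        fun trow => ball trow (σ.filterMap id)))
    else none

lemma computable_map_range {g : ℕ → List ℕ} (hg : Computable g) :
    Computable fun n => (List.range n).map g := by
  have step : Computable₂ fun (_ : ℕ) (p : ℕ × List (List ℕ)) => p.2 ++ [g p.1] := by
    have h1 : Computable fun q : ℕ × (ℕ × List (List ℕ)) => q.2.2 :=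
      Computable.snd.comp Computable.snd
    have h2 : Computable fun q : ℕ × (ℕ × List (List ℕ)) => [g q.2.1] :=
      (Primrec.list_cons.to_comp.comp (hg.comp (Computable.fst.comp Computable.snd))
        (Computable.const []))
    exact (Primrec.list_append.to_comp.comp h1 h2).to₂
  have key : ∀ n : ℕ, (Nat.rec [] (fun y IH => IH ++ [g y]) n : List (List ℕ)) =
      (List.range n).map g := by
    intro n
    induction n with
    | zero => simp
    | succ n ih =>
      show (Nat.rec [] (fun y IH => IH ++ [g y]) n : List (List ℕ)) ++ [g n] = _
      rw [List.range_succ, List.map_append, ih]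
      simp
  have := Computable.nat_rec Computable.id (Computable.const ([] : List (List ℕ))) step
  refine this.of_eq fun n => ?_
  exact key n

lemma ttLearner_computable {tt : ℕ → List ℕ} {g : ℕ → ℕ}
    (htt : Computable tt) (hgc : Computable g) : Computable (ttLearner tt g) := by
  have hc : Computable fun σ : List (Option ℕ) => σ.filterMap id :=
    filterMap_primrec.to_comp
  have httl : Computable fun σ : List (Option ℕ) => (List.range (σ.length + 1)).map tt :=
    (computable_map_range htt).comp
      (Primrec.succ.to_comp.comp Primrec.list_length.to_comp)
  have hfind : Primrec fun a : List ℕ × List (List ℕ) =>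
      a.2.findIdx fun trow => ball trow a.1 :=
    Primrec.list_findIdx Primrec.snd
      (Primrec.to₂ (ball_primrec.comp Primrec.snd (Primrec.fst.comp Primrec.fst)))
  have hk : Computable fun σ : List (Option ℕ) =>
      (((List.range (σ.length + 1)).map tt).findIdx
        fun trow => ball trow (σ.filterMap id)) :=
    hfind.to_comp.comp (hc.pair httl)
  have hlen : Computable fun σ : List (Option ℕ) =>
      ((List.range (σ.length + 1)).map tt).length :=
    Primrec.list_length.to_comp.comp httl
  have hcond : Computable fun σ : List (Option ℕ) =>
      decide ((((List.range (σ.length + 1)).map tt).findIdx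
        fun trow => ball trow (σ.filterMap id)) <
        ((List.range (σ.length + 1)).map tt).length) :=
    Primrec.nat_lt.decide.to_comp.comp hk hlen
  exact Computable.cond hcond
    (Primrec.option_some.to_comp.comp (hgc.comp hk)) (Computable.const none)

lemma ttLearner_finLearnsIn (η : PosEq) (tt : ℕ → List ℕ) (g : ℕ → ℕ)
    (hg : ∀ r, W (g r) = Gset η (tt r))
    (hsep : ∀ r r', (∀ d ∈ tt r, d ∈ Gset η (tt r')) → r = r') :
    FinLearnsIn W (ttLearner tt g) (Set.range fun r => Gset η (tt r)) := by
  classical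
  rintro L ⟨rs, rfl⟩ T hT
  -- the unique firing index is `rs`
  have huniq : ∀ m r, (∀ d ∈ tt r, d ∈ cntL (seg T m)) → r = rs := by
    intro m r hr
    exact hsep r rs fun d hd => cntL_seg_subset hT m (hr d hd)
  have hself : ∀ d ∈ tt rs, d ∈ Gset η (tt rs) := fun d hd => mem_Gset_self η hd
  have hex : ∃ m, rs ≤ m ∧ ∀ d ∈ tt rs, d ∈ cntL (seg T m) := by
    obtain ⟨m0, hm0⟩ := exists_seg_sup hT (tt rs) hself
    exact ⟨max rs m0, le_max_left _ _, fun d hd => cntL_seg_mono (le_max_right _ _) (hm0 d hd)⟩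
  have heval : ∀ m, (rs ≤ m ∧ ∀ d ∈ tt rs, d ∈ cntL (seg T m)) →
      ttLearner tt g (seg T m) = some (g rs) := by
    rintro m ⟨hrm, hd⟩
    set ttl := (List.range ((seg T m).length + 1)).map tt with httl
    have hlenttl : ttl.length = m + 1 := by
      rw [httl, List.length_map, List.length_range, seg_length]
    have hmem : tt rs ∈ ttl := by
      rw [httl]
      refine List.mem_map.2 ⟨rs, List.mem_range.2 ?_, rfl⟩
      rw [seg_length]; omega
    have hp : (fun trow => ball trow ((seg T m).filterMap id)) (tt rs) = true := by
      show ball (tt rs) ((seg T m).filterMap id) = true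
      rw [ball_iff]
      intro d hd'
      exact mem_filterMap_id.2 (hd d hd')
    have hklt : ttl.findIdx (fun trow => ball trow ((seg T m).filterMap id)) < ttl.length :=
      List.findIdx_lt_length_of_exists ⟨tt rs, hmem, hp⟩
    set k := ttl.findIdx (fun trow => ball trow ((seg T m).filterMap id)) with hk
    have hkp : ball (ttl[k]'hklt) ((seg T m).filterMap id) = true :=
      List.findIdx_getElem (w := hklt)
    have httlk : ttl[k]'hklt = tt k := by
      simp only [httl, List.getElem_map, List.getElem_range]
    have hkrs : k = rs := by
      apply huniq m k
      intro d hd'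
      exact mem_filterMap_id.1 ((ball_iff).1 (httlk ▸ hkp) d hd')
    show (bif decide (k < ttl.length) then some (g k) else none) = some (g rs)
    rw [decide_eq_true hklt, hkrs]
    rfl
  have hnone : ∀ m, ¬(rs ≤ m ∧ ∀ d ∈ tt rs, d ∈ cntL (seg T m)) →
      ttLearner tt g (seg T m) = none := by
    intro m hm
    set ttl := (List.range ((seg T m).length + 1)).map tt with httl
    have hlenttl : ttl.length = m + 1 := by
      rw [httl, List.length_map, List.length_range, seg_length]
    set k := ttl.findIdx (fun trow => ball trow ((seg T m).filterMap id)) with hk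
    have hnlt : ¬ (k < ttl.length) := by
      intro hlt
      have hkp : ball (ttl[k]'hlt) ((seg T m).filterMap id) = true :=
        List.findIdx_getElem (w := hlt)
      have httlk : ttl[k]'hlt = tt k := by
        simp only [httl, List.getElem_map, List.getElem_range]
      have hall : ∀ d ∈ tt k, d ∈ cntL (seg T m) := fun d hd =>
        mem_filterMap_id.1 ((ball_iff).1 (httlk ▸ hkp) d hd)
      have hkrs : k = rs := huniq m k hall
      apply hm
      constructor
      · rw [← hkrs]
        have : k < m + 1 := hlenttl ▸ hlt
        omega
      · rw [← hkrs]; exact hall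
    show (bif decide (k < ttl.length) then some (g k) else none) = none
    rw [decide_eq_false hnlt]
    rfl
  refine ⟨Nat.find hex, g rs, heval _ (Nat.find_spec hex), hg rs, ?_, ?_⟩
  · intro m hm
    exact hnone m (Nat.find_min hex hm)
  · intro j hj
    obtain ⟨h1, h2⟩ := Nat.find_spec hex
    rw [heval _ ⟨h1, h2⟩, heval j ⟨le_trans h1 hj, fun d hd => cntL_seg_mono hj (h2 d hd)⟩]

lemma finLearnable_of_tt (η : PosEq) (tt : ℕ → List ℕ) (htt : Computable tt)
    (hsep : ∀ r r', (∀ d ∈ tt r, d ∈ Gset η (tt r')) → r = r') :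
    FinLearnable (Set.range fun r => Gset η (tt r)) :=
  ⟨ttLearner tt (fun r => listIdx η (tt r)),
    ttLearner_computable htt ((listIdx_computable η).comp htt),
    ttLearner_finLearnsIn η tt _ (fun r => W_listIdx η (tt r)) hsep⟩


/-! ### Finiteness of the set of indices whose telltale splits into a fixed finite union -/

lemma bad_finite (η : PosEq) (l : ℕ → List ℕ)
    (TtG : ∀ i j, (∀ d ∈ l i, d ∈ Gset η (l j)) → i = j) (t0 : List ℕ) :
    {j | ∀ d ∈ l j, d ∈ Gset η t0}.Finite := by
  classical
  set Bad := {j | ∀ d ∈ l j, d ∈ Gset η t0} with hBad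
  set Φ : ℕ → Finset ℕ := fun j => t0.toFinset.filter (fun d' => d' ∈ Gset η (l j)) with hΦ
  have hsub : ∀ i ∈ Bad, ∀ j ∈ Bad, Φ i = Φ j → Gset η (l i) ⊆ Gset η (l j) := by
    rintro i hi j _ hij x ⟨d, hd, hdx⟩
    obtain ⟨d', hd', hd'd⟩ := hi d hd
    have hd'Gi : d' ∈ Φ i := by
      rw [hΦ]
      simp only [Finset.mem_filter, List.mem_toFinset]
      exact ⟨hd', d, hd, η.equiv.symm hd'd⟩
    rw [hij, hΦ] at hd'Gi
    simp only [Finset.mem_filter, List.mem_toFinset] at hd'Gi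
    obtain ⟨-, c, hc, hcd'⟩ := hd'Gi
    exact ⟨c, hc, η.equiv.trans (η.equiv.trans hcd' hd'd) hdx⟩
  have hinj : Set.InjOn Φ Bad := by
    intro i hi j hj hij
    apply TtG i j
    intro d hd
    exact hsub i hi j hj hij (mem_Gset_self η hd)
  have himg : (Φ '' Bad).Finite := by
    refine Set.Finite.subset (t0.toFinset.powerset.finite_toSet) ?_
    rintro _ ⟨j, -, rfl⟩
    simp only [Finset.coe_powerset, Set.mem_preimage, Set.mem_powerset_iff,
      Finset.coe_subset, hΦ]
    exact Finset.filter_subset _ _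
  exact Set.Finite.of_finite_image himg hinj

/-- If at least one η-family is finitely learnable, then there are
finitely learnable η-families 𝓛₁, 𝓛₂ whose union is an η-family that is not
finitely learnable; moreover 𝓛₂ ∖ 𝓛₁ contains exactly one language. -/
theorem stmt9 (η : PosEq) (h : ∃ C : Set (Set ℕ), EtaFamily η C ∧ FinLearnable C) :
    ∃ C₁ C₂ : Set (Set ℕ),
      EtaFamily η C₁ ∧ EtaFamily η C₂ ∧
      FinLearnable C₁ ∧ FinLearnable C₂ ∧
      EtaFamily η (C₁ ∪ C₂) ∧ ¬ FinLearnable (C₁ ∪ C₂) ∧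
      ∃ L : Set ℕ, C₂ \ C₁ = {L} := by
  classical
  obtain ⟨C, ⟨hCclosed, f, hfc, hfinj, hfrange⟩, M, hMc, hM⟩ := h
  obtain ⟨l, hlc, hl⟩ := exists_telltale hMc hfc hM hfrange
  -- the basic telltale separation property at the level of the original family
  have Tt : ∀ i j, (∀ d ∈ l i, d ∈ W (f j)) → i = j := by
    intro i j hij
    obtain ⟨-, σ, e, hσ, he⟩ := hl i
    have hWj : W (f j) ∈ C := by rw [hfrange]; exact ⟨j, rfl⟩
    have hWi : W (f i) ∈ C := by rw [hfrange]; exact ⟨i, rfl⟩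
    have h1 : W e = W (f j) := commit hM hWj (fun x hx => hij x ((hσ x).1 hx)) he
    have h2 : W e = W (f i) := commit hM hWi (fun x hx => (hl i).1 x ((hσ x).1 hx)) he
    exact hfinj i j (h2.symm.trans h1)
  have hGB : ∀ j, Gset η (l j) ⊆ W (f j) := by
    rintro j x ⟨d, hd, hdx⟩
    have hdB : d ∈ W (f j) := (hl j).1 d hd
    have hcl : EtaClosed η (W (f j)) :=
      hCclosed _ (by rw [hfrange]; exact ⟨j, rfl⟩)
    exact hcl d hdB hdx
  have TtG : ∀ i j, (∀ d ∈ l i, d ∈ Gset η (l j)) → i = j := fun i j hij =>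
    Tt i j fun d hd => hGB j (hij d hd)
  -- the set of indices whose telltale lies in `U = Gset η (l 0 ++ l 1)` is finite
  obtain ⟨b, hb⟩ := (bad_finite η l TtG (l 0 ++ l 1)).bddAbove
  set N := b + 1 with hN
  have hNBad : ∀ j, N ≤ j → ¬ (∀ d ∈ l j, d ∈ Gset η (l 0 ++ l 1)) := by
    intro j hj hbad
    have := hb hbad
    omega
  have hN1 : 1 ≤ N := by omega
  -- the three telltale families
  set tt1 : ℕ → List ℕ := fun r => Nat.casesOn r (l 0 ++ l 1) (fun k => l (N + k)) with htt1d
  set tt2 : ℕ → List ℕ := fun r => Nat.casesOn r (l 0) (fun k => l (N + k)) with htt2d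
  set tt3 : ℕ → List ℕ := fun r => Nat.casesOn r (l 0 ++ l 1)
    (fun k => Nat.casesOn k (l 0) (fun k' => l (N + k'))) with htt3d
  have hshift : Computable₂ fun (_ : ℕ) (k : ℕ) => l (N + k) :=
    (hlc.comp ((Primrec.nat_add.comp (Primrec.const N) Primrec.snd).to_comp)).to₂
  have htt1 : Computable tt1 :=
    Computable.nat_casesOn Computable.id (Computable.const (l 0 ++ l 1)) hshift
  have htt2 : Computable tt2 :=
    Computable.nat_casesOn Computable.id (Computable.const (l 0)) hshift
  have htt3 : Computable tt3 := by
    have hinner : Computable₂ fun (_ : ℕ) (k : ℕ) =>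
        Nat.casesOn (motive := fun _ => List ℕ) k (l 0) (fun k' => l (N + k')) := by
      have : Computable fun p : ℕ × ℕ =>
          Nat.casesOn (motive := fun _ => List ℕ) p.2 (l 0) (fun k' => l (N + k')) :=
        Computable.nat_casesOn Computable.snd (Computable.const (l 0))
          ((hlc.comp ((Primrec.nat_add.comp (Primrec.const N) Primrec.snd).to_comp)).to₂)
      exact this.to₂
    exact Computable.nat_casesOn Computable.id (Computable.const (l 0 ++ l 1)) hinner
  -- basic non-identities
  have hsubU0 : Gset η (l 0) ⊆ Gset η (l 0 ++ l 1) := by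
    rintro x ⟨d, hd, hdx⟩
    exact ⟨d, List.mem_append_left _ hd, hdx⟩
  have dU0 : Gset η (l 0 ++ l 1) ≠ Gset η (l 0) := by
    intro heq
    have h10 : ∀ d ∈ l 1, d ∈ Gset η (l 0) := by
      intro d hd
      rw [← heq]
      exact mem_Gset_self η (List.mem_append_right _ hd)
    have := TtG 1 0 h10
    omega
  have dUj : ∀ k, Gset η (l 0 ++ l 1) ≠ Gset η (l (N + k)) := by
    intro k heq
    apply hNBad (N + k) (by omega)
    intro d hd
    rw [heq]
    exact mem_Gset_self η hd
  have d0j : ∀ k, Gset η (l 0) ≠ Gset η (l (N + k)) := by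
    intro k heq
    have : ∀ d ∈ l (N + k), d ∈ Gset η (l 0) := by
      intro d hd
      rw [heq]
      exact mem_Gset_self η hd
    have := TtG (N + k) 0 this
    omega
  have djj : ∀ k k', Gset η (l (N + k)) = Gset η (l (N + k')) → k = k' := by
    intro k k' heq
    have : ∀ d ∈ l (N + k), d ∈ Gset η (l (N + k')) := by
      intro d hd
      rw [← heq]
      exact mem_Gset_self η hd
    have := TtG (N + k) (N + k') this
    omega
  -- separation for the two learnable families
  have hsep1 : ∀ r r', (∀ d ∈ tt1 r, d ∈ Gset η (tt1 r')) → r = r' := by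
    rintro (_ | k) (_ | k') hrr
    · rfl
    · exfalso
      have h0 : ∀ d ∈ l 0, d ∈ Gset η (l (N + k')) := fun d hd =>
        hrr d (List.mem_append_left _ hd)
      have := TtG 0 (N + k') h0
      omega
    · exact absurd hrr (hNBad (N + k) (by omega))
    · have := TtG (N + k) (N + k') hrr
      omega
  have hsep2 : ∀ r r', (∀ d ∈ tt2 r, d ∈ Gset η (tt2 r')) → r = r' := by
    rintro (_ | k) (_ | k') hrr
    · rfl
    · exfalso
      have := TtG 0 (N + k') hrr
      omega
    · exfalso
      apply hNBad (N + k) (by omega)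
      intro d hd
      exact hsubU0 (hrr d hd)
    · have := TtG (N + k) (N + k') hrr
      omega
  have hinj1 : ∀ r r', Gset η (tt1 r) = Gset η (tt1 r') → r = r' := by
    intro r r' heq
    apply hsep1 r r'
    intro d hd
    rw [← heq]
    exact mem_Gset_self η hd
  have hinj2 : ∀ r r', Gset η (tt2 r) = Gset η (tt2 r') → r = r' := by
    intro r r' heq
    apply hsep2 r r'
    intro d hd
    rw [← heq]
    exact mem_Gset_self η hd
  have hinj3 : ∀ r r', Gset η (tt3 r) = Gset η (tt3 r') → r = r' := by
    rintro (_ | (_ | k)) (_ | (_ | k')) heq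
    · rfl
    · exact absurd heq dU0
    · exact absurd heq (dUj k')
    · exact absurd heq.symm dU0
    · rfl
    · exact absurd heq (d0j k')
    · exact absurd heq.symm (dUj k)
    · exact absurd heq.symm (d0j k)
    · have := djj k k' heq
      omega
  -- the two families
  refine ⟨Set.range fun r => Gset η (tt1 r), Set.range fun r => Gset η (tt2 r),
    etaFamily_of_tt η tt1 htt1 hinj1, etaFamily_of_tt η tt2 htt2 hinj2,
    finLearnable_of_tt η tt1 htt1 hsep1, finLearnable_of_tt η tt2 htt2 hsep2, ?_, ?_, ?_⟩
  · -- the union is an η-family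
    have hunion : ((Set.range fun r => Gset η (tt1 r)) ∪ Set.range fun r => Gset η (tt2 r))
        = Set.range fun r => Gset η (tt3 r) := by
      ext S
      constructor
      · rintro (⟨(_ | k), rfl⟩ | ⟨(_ | k), rfl⟩)
        · exact ⟨0, rfl⟩
        · exact ⟨k + 2, rfl⟩
        · exact ⟨1, rfl⟩
        · exact ⟨k + 2, rfl⟩
      · rintro ⟨(_ | (_ | k)), rfl⟩
        · exact Or.inl ⟨0, rfl⟩
        · exact Or.inr ⟨0, rfl⟩
        · exact Or.inl ⟨k + 1, rfl⟩
    rw [hunion]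
    exact etaFamily_of_tt η tt3 htt3 hinj3
  · -- the union is not finitely learnable
    apply not_finLearnable_of_ssubset
      (L := Gset η (l 0)) (L' := Gset η (l 0 ++ l 1))
    · exact Or.inr ⟨0, rfl⟩
    · exact Or.inl ⟨0, rfl⟩
    · exact ⟨hsubU0, fun hcon => dU0 (le_antisymm hcon hsubU0)⟩
  · -- the difference is a single language
    refine ⟨Gset η (l 0), ?_⟩
    ext S
    constructor
    · rintro ⟨⟨(_ | k), rfl⟩, hnot⟩
      · rfl
      · exact absurd ⟨k + 1, rfl⟩ hnot
    · rintro rfl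
      refine ⟨⟨0, rfl⟩, ?_⟩
      rintro ⟨(_ | k), hr⟩
      · exact dU0 hr
      · exact d0j k hr.symm

end PEL
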